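/- For X ∈ ℝ^{n×p}, vec(A† C B† + X − A† A X B B†) = (Bᵀ ⊗ A)† vec(C) + (I − (Bᵀ ⊗ A)† (Bᵀ ⊗ A)) vec(X); that is, the matrix form of the best approximate solution corresponds under vectorization to the vector form. -/

import Mathlib

open Matrix Kronecker

/-- `Ad` satisfies the four Penrose conditions for `A`, i.e. `Ad = A†`. -/
def IsMP {m n : Type*} [Fintype m] [Fintype n] [DecidableEq m] [DecidableEq n]
    (A : Matrix m n ℝ) (Ad : Matrix n m ℝ) : Prop :=
  A * Ad * A = A ∧ Ad * A * Ad = Ad ∧ (A * Ad)ᵀ = A * Ad ∧ (Ad * A)ᵀ = Ad * A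

/-- Frobenius norm. -/
noncomputable def frobNorm {m n : Type*} [Fintype m] [Fintype n]
    (M : Matrix m n ℝ) : ℝ :=
  Real.sqrt (∑ i, ∑ j, (M i j) ^ 2)

/-- Euclidean norm of a vector. -/
noncomputable def enorm {n : Type*} [Fintype n] (v : n → ℝ) : ℝ :=
  Real.sqrt (∑ i, (v i) ^ 2)

/-- Column-stacking vectorization: `vec M (j, i) = M i j`. -/
def vec {m n : Type*} (M : Matrix m n ℝ) : n × m → ℝ := fun p => M p.2 p.1

lemma isMP_transpose {m n : Type*} [Fintype m] [Fintype n] [DecidableEq m] [DecidableEq n]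
    {A : Matrix m n ℝ} {Ad : Matrix n m ℝ} (h : IsMP A Ad) : IsMP Aᵀ Adᵀ := by
  obtain ⟨a, b, c, d⟩ := h
  refine ⟨?_, ?_, ?_, ?_⟩
  · rw [Matrix.mul_assoc, ← transpose_mul, ← transpose_mul, a]
  · rw [Matrix.mul_assoc, ← transpose_mul, ← transpose_mul, b]
  · rw [← transpose_mul, d, d]
  · rw [← transpose_mul, c, c]

lemma isMP_kron {m n p r : Type*} [Fintype m] [Fintype n] [Fintype p] [Fintype r]
    [DecidableEq m] [DecidableEq n] [DecidableEq p] [DecidableEq r]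
    {A : Matrix m n ℝ} {Ad : Matrix n m ℝ} {B : Matrix p r ℝ} {Bd : Matrix r p ℝ}
    (hA : IsMP A Ad) (hB : IsMP B Bd) : IsMP (B ⊗ₖ A) (Bd ⊗ₖ Ad) := by
  obtain ⟨a1, b1, c1, d1⟩ := hA
  obtain ⟨a2, b2, c2, d2⟩ := hB
  refine ⟨?_, ?_, ?_, ?_⟩
  · rw [← Matrix.mul_kronecker_mul, ← Matrix.mul_kronecker_mul, a1, a2]
  · rw [← Matrix.mul_kronecker_mul, ← Matrix.mul_kronecker_mul, b1, b2]
  · rw [← Matrix.mul_kronecker_mul]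
    show (B * Bd)ᵀ ⊗ₖ (A * Ad)ᵀ = _
    rw [c1, c2, Matrix.mul_kronecker_mul]
  · rw [← Matrix.mul_kronecker_mul]
    show (Bd * B)ᵀ ⊗ₖ (Ad * A)ᵀ = _
    rw [d1, d2, Matrix.mul_kronecker_mul]

/-- Uniqueness of the Moore–Penrose pseudoinverse. -/
lemma isMP_unique {m n : Type*} [Fintype m] [Fintype n] [DecidableEq m] [DecidableEq n]
    (A : Matrix m n ℝ) (K1 K2 : Matrix n m ℝ) (h1 : IsMP A K1) (h2 : IsMP A K2) :
    K1 = K2 := by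
  obtain ⟨a1, b1, c1, d1⟩ := h1
  obtain ⟨a2, b2, c2, d2⟩ := h2
  have t1 : A * K1 = K1ᵀ * Aᵀ := by conv_lhs => rw [← c1, transpose_mul]
  have t2 : A * K2 = K2ᵀ * Aᵀ := by conv_lhs => rw [← c2, transpose_mul]
  have s1 : K1 * A = Aᵀ * K1ᵀ := by conv_lhs => rw [← d1, transpose_mul]
  have s2 : K2 * A = Aᵀ * K2ᵀ := by conv_lhs => rw [← d2, transpose_mul]
  have e1 : Aᵀ * (K1ᵀ * Aᵀ) = Aᵀ := by
    rw [← transpose_mul, ← transpose_mul, a1]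
  have hAK : A * K1 = A * K2 := by
    calc A * K1 = A * K2 * (A * K1) := by rw [← Matrix.mul_assoc, a2]
    _ = K2ᵀ * Aᵀ * (K1ᵀ * Aᵀ) := by rw [← t1, ← t2]
    _ = K2ᵀ * (Aᵀ * (K1ᵀ * Aᵀ)) := by rw [Matrix.mul_assoc]
    _ = K2ᵀ * Aᵀ := by rw [e1]
    _ = A * K2 := t2.symm
  have f1 : Aᵀ * K1ᵀ * Aᵀ = Aᵀ := by rw [Matrix.mul_assoc, e1]
  have hKA : K1 * A = K2 * A := by
    calc K1 * A = K1 * A * (K2 * A) := by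
          rw [Matrix.mul_assoc, ← Matrix.mul_assoc A K2 A, a2]
    _ = Aᵀ * K1ᵀ * (Aᵀ * K2ᵀ) := by rw [← s1, ← s2]
    _ = Aᵀ * K1ᵀ * Aᵀ * K2ᵀ := by rw [Matrix.mul_assoc, Matrix.mul_assoc, Matrix.mul_assoc]
    _ = Aᵀ * K2ᵀ := by rw [f1]
    _ = K2 * A := s2.symm
  calc K1 = K1 * A * K1 := b1.symm
  _ = K1 * (A * K2) := by rw [← hAK, Matrix.mul_assoc]
  _ = K2 * A * K2 := by rw [← Matrix.mul_assoc, hKA]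
  _ = K2 := b2

lemma kron_mulVec_vec {m n p r : ℕ} (A : Matrix (Fin m) (Fin n) ℝ)
    (B : Matrix (Fin p) (Fin r) ℝ) (X : Matrix (Fin n) (Fin p) ℝ) :
    (Bᵀ ⊗ₖ A).mulVec (_root_.vec X) = _root_.vec (A * X * B) := by
  funext ⟨j, i⟩
  simp only [Matrix.mulVec, _root_.vec, dotProduct, Fintype.sum_prod_type,
    Matrix.kroneckerMap_apply, Matrix.mul_apply, transpose_apply, Finset.sum_mul,
    Finset.mul_sum]
  refine Finset.sum_congr rfl fun l _ => Finset.sum_congr rfl fun k _ => by ring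

theorem stmt_18 {m n p r : ℕ}
    (A : Matrix (Fin m) (Fin n) ℝ) (B : Matrix (Fin p) (Fin r) ℝ) (C : Matrix (Fin m) (Fin r) ℝ)
    (Ad : Matrix (Fin n) (Fin m) ℝ) (Bd : Matrix (Fin r) (Fin p) ℝ)
    (hA : IsMP A Ad) (hB : IsMP B Bd)
    (K : Matrix (Fin p × Fin n) (Fin r × Fin m) ℝ) (hK : IsMP (Bᵀ ⊗ₖ A) K)
    (X : Matrix (Fin n) (Fin p) ℝ) :
    _root_.vec (Ad * C * Bd + X - Ad * A * X * B * Bd) =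
      K.mulVec (_root_.vec C) +
        ((1 : Matrix (Fin p × Fin n) (Fin p × Fin n) ℝ) - K * (Bᵀ ⊗ₖ A)).mulVec (_root_.vec X) := by
  have hMP : IsMP (Bᵀ ⊗ₖ A) (Bdᵀ ⊗ₖ Ad) := isMP_kron hA (isMP_transpose hB)
  have hKeq : K = Bdᵀ ⊗ₖ Ad := isMP_unique _ _ _ hK hMP
  subst hKeq
  rw [Matrix.sub_mulVec, Matrix.one_mulVec]
  rw [show (Bdᵀ ⊗ₖ Ad) * (Bᵀ ⊗ₖ A) = ((B * Bd)ᵀ ⊗ₖ (Ad * A)) by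
    rw [← Matrix.mul_kronecker_mul, transpose_mul]]
  rw [kron_mulVec_vec Ad Bd C, kron_mulVec_vec (Ad * A) (B * Bd) X]
  funext ⟨j, i⟩
  simp [_root_.vec, Matrix.mul_assoc]
  ring
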